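/- For |z| > 1, lim_{n→∞} |Q_{n,n}(z)|^{1/n} = |(z+1)²/z| if |(z+1)²/(4z)| > 1, while lim_{n→∞} |Q_{n,n}(z)|^{1/n} = 4 for all z with |(z+1)²/(4z)| < 1, where Q_{n,n}(z) = Σ_{k=0}^n C(2n, k+n) z^k. -/

import Mathlib

open Filter Real

/-- Borwein–Chen–Dilcher polynomial `Q_{n,n}`. -/
noncomputable def Qnn (n : ℕ) (z : ℂ) : ℂ :=
  ∑ k ∈ Finset.range (n + 1), ((2 * n).choose (k + n) : ℂ) * z ^ k

/-- difference of consecutive binomials right of center -/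
def Dd (n k : ℕ) : ℕ := (2 * n).choose (n + k) - (2 * n).choose (n + k + 1)

lemma choose_step (n k : ℕ) : (2 * n).choose (n + k + 1) ≤ (2 * n).choose (n + k) := by
  have h := Nat.choose_succ_right_eq (2 * n) (n + k)
  have h2 : 2 * n - (n + k) ≤ n + k + 1 := by omega
  have := Nat.mul_le_mul_left ((2 * n).choose (n + k)) h2
  have h3 : (2 * n).choose (n + k + 1) * (n + k + 1) ≤ (2 * n).choose (n + k) * (n + k + 1) := by
    calc (2 * n).choose (n + k + 1) * (n + k + 1) = (2 * n).choose (n + k) * (2 * n - (n + k)) := h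
    _ ≤ (2 * n).choose (n + k) * (n + k + 1) := Nat.mul_le_mul_left _ h2
  exact Nat.le_of_mul_le_mul_right h3 (by omega)

lemma Dd_cast (n k : ℕ) : (Dd n k : ℝ) = ((2 * n).choose (n + k) : ℝ) - ((2 * n).choose (n + k + 1) : ℝ) := by
  rw [Dd, Nat.cast_sub (choose_step n k)]

lemma Dd_zero_mul (n : ℕ) : (n + 1) * Dd n 0 = (2 * n).choose n := by
  have h := Nat.choose_succ_right_eq (2 * n) n
  have h2 : 2 * n - n = n := by omega
  rw [h2] at h
  have hle : (2 * n).choose (n + 1) ≤ (2 * n).choose n := by simpa using choose_step n 0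
  have : (n + 1) * Dd n 0 = (n + 1) * (2 * n).choose n - (n + 1) * (2 * n).choose (n + 1) := by
    rw [Dd]; simp [Nat.mul_sub]
  rw [this]
  have h3 : (n + 1) * (2 * n).choose (n + 1) = n * (2 * n).choose n := by
    rw [Nat.mul_comm]; rw [h, Nat.mul_comm]
  rw [h3]
  have : (n + 1) * (2 * n).choose n = n * (2 * n).choose n + (2 * n).choose n := by ring
  omega

lemma choose_2n_le (n j : ℕ) : (2 * n).choose j ≤ 4 ^ n := by
  calc (2 * n).choose j ≤ ∑ i ∈ Finset.range (2 * n + 1), (2 * n).choose i := by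
        rcases le_or_gt j (2 * n) with h | h
        · exact Finset.single_le_sum (f := fun i => (2 * n).choose i) (fun i _ => Nat.zero_le _)
            (Finset.mem_range.2 (by omega))
        · simp [Nat.choose_eq_zero_of_lt h]
  _ = 2 ^ (2 * n) := Nat.sum_range_choose (2 * n)
  _ = 4 ^ n := by rw [pow_mul]; norm_num

lemma sum_c_le (n : ℕ) : (∑ k ∈ Finset.range (n + 1), (2 * n).choose (k + n)) ≤ 4 ^ n := by
  have h1 : (∑ k ∈ Finset.range (n + 1), (2 * n).choose (k + n))
      = ∑ j ∈ Finset.Ico n (2 * n + 1), (2 * n).choose j := by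
    rw [Finset.sum_Ico_eq_sum_range]
    have h2 : 2 * n + 1 - n = n + 1 := by omega
    rw [h2]
    exact Finset.sum_congr rfl (fun k _ => by rw [Nat.add_comm])
  rw [h1]
  calc (∑ j ∈ Finset.Ico n (2 * n + 1), (2 * n).choose j)
      ≤ ∑ j ∈ Finset.range (2 * n + 1), (2 * n).choose j := by
        rw [Finset.range_eq_Ico]
        exact Finset.sum_le_sum_of_subset (Finset.Ico_subset_Ico (Nat.zero_le _) le_rfl)
  _ = 2 ^ (2 * n) := Nat.sum_range_choose (2 * n)
  _ = 4 ^ n := by rw [pow_mul]; norm_num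

lemma abs_qnn_le (n : ℕ) {z : ℂ} (hz : ‖z‖ ≤ 1) : ‖Qnn n z‖ ≤ 4 ^ n := by
  have habs : ‖z‖ ≥ 0 := norm_nonneg z
  calc ‖Qnn n z‖
      ≤ ∑ k ∈ Finset.range (n + 1), ‖((2 * n).choose (k + n) : ℂ) * z ^ k‖ := by
        exact norm_sum_le _ _
  _ ≤ ∑ k ∈ Finset.range (n + 1), ((2 * n).choose (k + n) : ℝ) := by
        refine Finset.sum_le_sum (fun k _ => ?_)
        rw [norm_mul, norm_pow]
        have h1 : ‖((2 * n).choose (k + n) : ℂ)‖ = ((2 * n).choose (k + n) : ℝ) := by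
          simp
        rw [h1]
        have h2 : ‖z‖ ^ k ≤ 1 := pow_le_one₀ habs hz
        nlinarith [Nat.cast_nonneg (α := ℝ) ((2 * n).choose (k + n))]
  _ ≤ (4 : ℝ) ^ n := by
        have := sum_c_le n
        calc (∑ k ∈ Finset.range (n + 1), ((2 * n).choose (k + n) : ℝ))
            = ((∑ k ∈ Finset.range (n + 1), (2 * n).choose (k + n) : ℕ) : ℝ) := by push_cast; ring
        _ ≤ ((4 ^ n : ℕ) : ℝ) := by exact_mod_cast this
        _ = 4 ^ n := by push_cast; ring

lemma Dd_castC (n k : ℕ) : (Dd n k : ℂ) = ((2 * n).choose (k + n) : ℂ) - ((2 * n).choose (k + 1 + n) : ℂ) := by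
  have h2 : (2 * n).choose (n + k + 1) = (2 * n).choose (k + 1 + n) := by
    congr 1; omega
  have h1 : (2 * n).choose (n + k) = (2 * n).choose (k + n) := by
    congr 1; omega
  rw [Dd, h1, h2, Nat.cast_sub]
  rw [← h1, ← h2]; exact choose_step n k

lemma key_id (n : ℕ) (z : ℂ) :
    (1 - z) * Qnn n z
      = ((2 * n).choose n : ℂ) - (∑ k ∈ Finset.range n, (Dd n k : ℂ) * z ^ (k + 1)) - z ^ (n + 1) := by
  have e1 : Qnn n z = ((2 * n).choose n : ℂ)
      + ∑ k ∈ Finset.range n, ((2 * n).choose (k + 1 + n) : ℂ) * z ^ (k + 1) := by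
    rw [Qnn, Finset.sum_range_succ']
    simp [add_comm]
  have e2 : z * Qnn n z = (∑ k ∈ Finset.range n, ((2 * n).choose (k + n) : ℂ) * z ^ (k + 1))
      + z ^ (n + 1) := by
    rw [Qnn, Finset.mul_sum, Finset.sum_range_succ]
    have hlast : (2 * n).choose (n + n) = 1 := by
      have : n + n = 2 * n := by omega
      rw [this, Nat.choose_self]
    rw [hlast]
    push_cast
    ring_nf
  have : (1 - z) * Qnn n z = Qnn n z - z * Qnn n z := by ring
  rw [this, e2, e1]
  simp_rw [Dd_castC, sub_mul, Finset.sum_sub_distrib]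
  ring

lemma sum_Dd (n : ℕ) : (∑ k ∈ Finset.range n, (Dd n k : ℝ)) = ((2 * n).choose n : ℝ) - 1 := by
  have h : ∀ k ∈ Finset.range n, (Dd n k : ℝ)
      = (fun i => ((2 * n).choose (n + i) : ℝ)) k - (fun i => ((2 * n).choose (n + i) : ℝ)) (k + 1) := by
    intro k _
    simp only [Dd_cast]
    have : n + k + 1 = n + (k + 1) := by omega
    rw [this]
  rw [Finset.sum_congr rfl h, Finset.sum_range_sub']
  have h2 : n + n = 2 * n := by ring
  simp [h2, Nat.choose_self]

lemma sum_Dd_tail (m : ℕ) :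
    (∑ k ∈ Finset.range m, (Dd (m + 1) (k + 1) : ℝ))
      = ((2 * (m + 1)).choose (m + 1) : ℝ) - 1 - (Dd (m + 1) 0 : ℝ) := by
  have h := sum_Dd (m + 1)
  rw [Finset.sum_range_succ'] at h
  linarith

lemma re_le_one_of_abs_le {w : ℂ} (h : ‖w‖ ≤ 1) : w.re ≤ 1 :=
  le_trans (Complex.re_le_norm w) h

lemma re_bound (m : ℕ) {z : ℂ} (hz : ‖z‖ ≤ 1) :
    (Dd (m + 1) 0 : ℝ) * (1 - z.re) ≤ ((1 - z) * Qnn (m + 1) z).re := by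
  set n := m + 1 with hn
  rw [key_id]
  have hre : ∀ j : ℕ, (z ^ j).re ≤ 1 := by
    intro j
    apply re_le_one_of_abs_le
    rw [norm_pow]
    exact pow_le_one₀ (norm_nonneg z) hz
  have hS : (∑ k ∈ Finset.range n, (Dd n k : ℂ) * z ^ (k + 1)).re
      = ∑ k ∈ Finset.range n, (Dd n k : ℝ) * (z ^ (k + 1)).re := by
    rw [Complex.re_sum]
    exact Finset.sum_congr rfl (fun k _ => by
      simp [Complex.mul_re, Complex.natCast_re, Complex.natCast_im])
  simp only [Complex.sub_re, Complex.natCast_re, hS]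
  have hsplit : (∑ k ∈ Finset.range n, (Dd n k : ℝ) * (z ^ (k + 1)).re)
      = (∑ k ∈ Finset.range m, (Dd n (k + 1) : ℝ) * (z ^ (k + 2)).re)
        + (Dd n 0 : ℝ) * z.re := by
    rw [hn, Finset.sum_range_succ']
    norm_num
  rw [hsplit]
  have htail : (∑ k ∈ Finset.range m, (Dd n (k + 1) : ℝ) * (z ^ (k + 2)).re)
      ≤ ∑ k ∈ Finset.range m, (Dd n (k + 1) : ℝ) := by
    refine Finset.sum_le_sum (fun k _ => ?_)
    have := hre (k + 2)
    nlinarith [Nat.cast_nonneg (α := ℝ) (Dd n (k + 1))]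
  have hsum := sum_Dd_tail m
  have hlast := hre (n + 1)
  rw [← hn] at hsum
  linarith

lemma abs_C_sub_qnn (m : ℕ) {w : ℂ} (hw : ‖w‖ < 1) :
    (((2 * (m + 1)).choose (m + 1) : ℝ) - (Dd (m + 1) 0 : ℝ))
        * (‖w‖ * (1 - ‖w‖))
      ≤ 2 * ‖((2 * (m + 1)).choose (m + 1) : ℂ) - Qnn (m + 1) w‖ := by
  set n := m + 1 with hn
  set r := ‖w‖ with hr
  have hr0 : 0 ≤ r := norm_nonneg w
  set C : ℝ := ((2 * n).choose n : ℝ) with hC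
  -- the identity
  have hid : (1 - w) * (((2 * n).choose n : ℂ) - Qnn n w)
      = ((Dd n 0 : ℂ) - ((2 * n).choose n : ℂ)) * w
        + ((∑ k ∈ Finset.range m, (Dd n (k + 1) : ℂ) * w ^ (k + 2)) + w ^ (n + 1)) := by
    have hk := key_id n w
    have hsplit : (∑ k ∈ Finset.range n, (Dd n k : ℂ) * w ^ (k + 1))
        = (∑ k ∈ Finset.range m, (Dd n (k + 1) : ℂ) * w ^ (k + 2)) + (Dd n 0 : ℂ) * w ^ 1 := by
      rw [hn, Finset.sum_range_succ']
    calc (1 - w) * (((2 * n).choose n : ℂ) - Qnn n w)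
        = ((2 * n).choose n : ℂ) * (1 - w) - (1 - w) * Qnn n w := by ring
      _ = _ := by rw [hk, hsplit]; ring
  -- bound pieces
  have hD0le : (Dd n 0 : ℝ) ≤ C := by
    rw [hC]
    have : Dd n 0 ≤ (2 * n).choose n := by
      rw [Dd]
      exact le_trans (Nat.sub_le _ _) (by norm_num)
    exact_mod_cast this
  have habs1 : ‖((Dd n 0 : ℂ) - ((2 * n).choose n : ℂ)) * w‖ = (C - (Dd n 0 : ℝ)) * r := by
    rw [norm_mul, ← hr]
    congr 1
    rw [← norm_neg]
    have h1 : -((Dd n 0 : ℂ) - ((2 * n).choose n : ℂ)) = ((C - (Dd n 0 : ℝ) : ℝ) : ℂ) := by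
      rw [hC]; push_cast; ring
    rw [h1, Complex.norm_real, Real.norm_eq_abs, abs_of_nonneg (by linarith)]
  have habsT : ‖∑ k ∈ Finset.range m, (Dd n (k + 1) : ℂ) * w ^ (k + 2)‖
      ≤ (C - 1 - (Dd n 0 : ℝ)) * r ^ 2 := by
    calc ‖∑ k ∈ Finset.range m, (Dd n (k + 1) : ℂ) * w ^ (k + 2)‖
        ≤ ∑ k ∈ Finset.range m, ‖(Dd n (k + 1) : ℂ) * w ^ (k + 2)‖ :=
          norm_sum_le _ _
      _ ≤ ∑ k ∈ Finset.range m, (Dd n (k + 1) : ℝ) * r ^ 2 := by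
          refine Finset.sum_le_sum (fun k _ => ?_)
          rw [norm_mul, norm_pow, ← hr]
          have h1 : ‖(Dd n (k + 1) : ℂ)‖ = (Dd n (k + 1) : ℝ) := by
            simp
          rw [h1]
          have h2 : r ^ (k + 2) ≤ r ^ 2 := pow_le_pow_of_le_one hr0 hw.le (by omega)
          nlinarith [Nat.cast_nonneg (α := ℝ) (Dd n (k + 1))]
      _ = (C - 1 - (Dd n 0 : ℝ)) * r ^ 2 := by
          rw [← Finset.sum_mul, sum_Dd_tail m, ← hn, ← hC]
  have habsP : ‖w ^ (n + 1)‖ ≤ r ^ 2 := by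
    rw [norm_pow, ← hr]
    exact pow_le_pow_of_le_one hr0 hw.le (by omega)
  -- triangle inequalities
  have htri : (C - (Dd n 0 : ℝ)) * r - ((C - 1 - (Dd n 0 : ℝ)) * r ^ 2 + r ^ 2)
      ≤ ‖(1 - w) * (((2 * n).choose n : ℂ) - Qnn n w)‖ := by
    rw [hid]
    set x := ((Dd n 0 : ℂ) - ((2 * n).choose n : ℂ)) * w
    set y := (∑ k ∈ Finset.range m, (Dd n (k + 1) : ℂ) * w ^ (k + 2)) + w ^ (n + 1)
    have h1 : ‖x‖ - ‖y‖ ≤ ‖x + y‖ := by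
      have h := norm_sub_le (x + y) y
      simp only [add_sub_cancel_right] at h
      linarith
    have h2 : ‖y‖ ≤ (C - 1 - (Dd n 0 : ℝ)) * r ^ 2 + r ^ 2 :=
      le_trans (norm_add_le _ _) (by linarith)
    rw [habs1] at h1
    linarith
  have hlhs : ‖(1 - w) * (((2 * n).choose n : ℂ) - Qnn n w)‖
      ≤ 2 * ‖((2 * n).choose n : ℂ) - Qnn n w‖ := by
    rw [norm_mul]
    have h1 : ‖1 - w‖ ≤ 2 := by
      calc ‖1 - w‖ ≤ ‖1‖ + ‖w‖ := norm_sub_le 1 w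
      _ ≤ 2 := by rw [norm_one, ← hr]; linarith
    nlinarith [norm_nonneg (((2 * n).choose n : ℂ) - Qnn n w)]
  have hD0' : (Dd n 0 : ℝ) ≥ 0 := Nat.cast_nonneg _
  nlinarith [htri, hlhs]

lemma qnn_symm (n : ℕ) {z : ℂ} (hz : z ≠ 0) :
    Qnn n z = (1 + z) ^ (2 * n) / z ^ n + ((2 * n).choose n : ℂ) - Qnn n z⁻¹ := by
  have hzn : z ^ n ≠ 0 := pow_ne_zero n hz
  have key : (1 + z) ^ (2 * n)
      = z ^ n * Qnn n z + z ^ n * Qnn n z⁻¹ - ((2 * n).choose n : ℂ) * z ^ n := by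
    have hpow : (1 + z) ^ (2 * n)
        = ∑ j ∈ Finset.range (2 * n + 1), z ^ j * ((2 * n).choose j : ℂ) := by
      rw [add_comm 1 z, add_pow]
      exact Finset.sum_congr rfl (fun j _ => by rw [one_pow, mul_one])
    have h2n : 2 * n + 1 = n + (n + 1) := by omega
    rw [hpow, h2n, Finset.sum_range_add]
    have hA : (∑ j ∈ Finset.range (n + 1), z ^ (n + j) * ((2 * n).choose (n + j) : ℂ))
        = z ^ n * Qnn n z := by
      rw [Qnn, Finset.mul_sum]
      refine Finset.sum_congr rfl (fun j _ => ?_)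
      rw [pow_add]
      have hc : (2 * n).choose (n + j) = (2 * n).choose (j + n) := by congr 1; omega
      rw [hc]; ring
    have hB : (∑ j ∈ Finset.range n, z ^ j * ((2 * n).choose j : ℂ))
        = z ^ n * Qnn n z⁻¹ - ((2 * n).choose n : ℂ) * z ^ n := by
      have hQ : z ^ n * Qnn n z⁻¹
          = (∑ k ∈ Finset.range n, ((2 * n).choose (k + 1 + n) : ℂ) * (z ^ n * z⁻¹ ^ (k + 1)))
            + ((2 * n).choose n : ℂ) * z ^ n := by
        rw [Qnn, Finset.mul_sum, Finset.sum_range_succ']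
        norm_num
        congr 1
        · exact Finset.sum_congr rfl (fun k _ => by ring)
        · ring
      rw [hQ]
      have hrefl : (∑ j ∈ Finset.range n, z ^ j * ((2 * n).choose j : ℂ))
          = ∑ k ∈ Finset.range n, ((2 * n).choose (k + 1 + n) : ℂ) * (z ^ n * z⁻¹ ^ (k + 1)) := by
        rw [← Finset.sum_range_reflect]
        refine Finset.sum_congr rfl (fun k hk => ?_)
        have hkn : k < n := Finset.mem_range.mp hk
        have hc : (2 * n).choose (n - 1 - k) = (2 * n).choose (k + 1 + n) := by
          have h1 : k + 1 + n ≤ 2 * n := by omega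
          have h2 : 2 * n - (k + 1 + n) = n - 1 - k := by omega
          rw [← h2, Nat.choose_symm h1]
        have hp : z ^ (n - 1 - k) = z ^ n * z⁻¹ ^ (k + 1) := by
          have h3 : n = (n - 1 - k) + (k + 1) := by omega
          rw [inv_pow]
          field_simp
          rw [← pow_add]
          congr 1
          omega
        rw [hc, hp]; ring
      rw [hrefl]; ring
    rw [hA, hB]; ring
  have h : (z ^ n * Qnn n z + z ^ n * Qnn n z⁻¹ - ((2 * n).choose n : ℂ) * z ^ n) / z ^ n
      = Qnn n z + Qnn n z⁻¹ - ((2 * n).choose n : ℂ) := by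
    field_simp
  rw [key, h]
  ring


lemma aux_const_rpow {c : ℝ} (hc : 0 < c) :
    Tendsto (fun n : ℕ => c ^ ((1 : ℝ) / n)) atTop (nhds 1) := by
  have h1 : Tendsto (fun n : ℕ => Real.log c * (1 / n)) atTop (nhds 0) := by
    simpa using (tendsto_one_div_atTop_nhds_zero_nat).const_mul (Real.log c)
  have h2 := (Real.continuous_exp.tendsto 0).comp h1
  simp only [Function.comp_def, Real.exp_zero] at h2
  refine h2.congr (fun n => ?_)
  rw [Real.rpow_def_of_pos hc]

lemma aux_nat_rpow : Tendsto (fun n : ℕ => (n : ℝ) ^ ((1 : ℝ) / n)) atTop (nhds 1) := by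
  have h := tendsto_rpow_div.comp (tendsto_natCast_atTop_atTop (R := ℝ))
  exact h

lemma aux_poly_rpow :
    Tendsto (fun n : ℕ => (((n : ℝ) + 1) * (2 * n + 1)) ^ ((1 : ℝ) / n)) atTop (nhds 1) := by
  have hup : Tendsto (fun n : ℕ => ((n : ℝ) ^ ((1 : ℝ) / n)) ^ 4) atTop (nhds 1) := by
    have := aux_nat_rpow.pow 4
    simpa using this
  refine tendsto_of_tendsto_of_tendsto_of_le_of_le' tendsto_const_nhds hup ?_ ?_
  · filter_upwards [eventually_ge_atTop 1] with n hn
    apply Real.one_le_rpow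
    · have : (1 : ℝ) ≤ (n : ℝ) := by exact_mod_cast hn
      nlinarith
    · positivity
  · filter_upwards [eventually_ge_atTop 3] with n hn
    have hn3 : (3 : ℝ) ≤ (n : ℝ) := by exact_mod_cast hn
    have hb : ((n : ℝ) + 1) * (2 * n + 1) ≤ (n : ℝ) ^ 4 := by
      nlinarith [sq_nonneg ((n : ℝ)), sq_nonneg ((n : ℝ) ^ 2 - 9)]
    have h1 : (((n : ℝ) + 1) * (2 * n + 1)) ^ ((1 : ℝ) / n) ≤ ((n : ℝ) ^ 4) ^ ((1 : ℝ) / n) := by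
      apply Real.rpow_le_rpow (by positivity) hb (by positivity)
    have h2 : ((n : ℝ) ^ 4) ^ ((1 : ℝ) / n) = ((n : ℝ) ^ ((1 : ℝ) / n)) ^ 4 := by
      rw [← Real.rpow_natCast ((n : ℝ) ^ ((1:ℝ)/n)) 4, ← Real.rpow_natCast (n : ℝ) 4,
        ← Real.rpow_mul (by positivity), ← Real.rpow_mul (by positivity)]
      ring_nf
    rw [← h2]
    exact h1

lemma master {x : ℕ → ℝ} {L c₁ c₂ : ℝ} (hL : 0 < L) (hc₁ : 0 < c₁) (hc₂ : 0 < c₂)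
    (h : ∀ᶠ n : ℕ in atTop, c₁ * L ^ n / (((n : ℝ) + 1) * (2 * n + 1)) ≤ x n ∧ x n ≤ c₂ * L ^ n) :
    Tendsto (fun n : ℕ => x n ^ ((1 : ℝ) / n)) atTop (nhds L) := by
  have hlowlim : Tendsto (fun n : ℕ =>
      c₁ ^ ((1 : ℝ) / n) * L / (((n : ℝ) + 1) * (2 * n + 1)) ^ ((1 : ℝ) / n)) atTop (nhds L) := by
    have := ((aux_const_rpow hc₁).mul_const L).div aux_poly_rpow one_ne_zero
    simpa [Pi.div_def] using this
  have huplim : Tendsto (fun n : ℕ => c₂ ^ ((1 : ℝ) / n) * L) atTop (nhds L) := by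
    have := (aux_const_rpow hc₂).mul_const L
    simpa using this
  have hlow : Tendsto (fun n : ℕ =>
      (c₁ * L ^ n / (((n : ℝ) + 1) * (2 * n + 1))) ^ ((1 : ℝ) / n)) atTop (nhds L) := by
    refine Tendsto.congr' ?_ hlowlim
    filter_upwards [eventually_ge_atTop 1] with n hn
    have hn0 : ((n : ℝ)) ≠ 0 := Nat.cast_ne_zero.2 (by omega)
    have hP : (0 : ℝ) < ((n : ℝ) + 1) * (2 * n + 1) := by positivity
    rw [Real.div_rpow (by positivity) hP.le, Real.mul_rpow hc₁.le (by positivity),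
      ← Real.rpow_natCast L n, ← Real.rpow_mul hL.le, mul_one_div, div_self hn0, Real.rpow_one]
  have hup : Tendsto (fun n : ℕ => (c₂ * L ^ n) ^ ((1 : ℝ) / n)) atTop (nhds L) := by
    refine Tendsto.congr' ?_ huplim
    filter_upwards [eventually_ge_atTop 1] with n hn
    have hn0 : ((n : ℝ)) ≠ 0 := Nat.cast_ne_zero.2 (by omega)
    rw [Real.mul_rpow hc₂.le (by positivity),
      ← Real.rpow_natCast L n, ← Real.rpow_mul hL.le, mul_one_div, div_self hn0, Real.rpow_one]
  refine tendsto_of_tendsto_of_tendsto_of_le_of_le' hlow hup ?_ ?_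
  · filter_upwards [h] with n hn
    exact Real.rpow_le_rpow (by positivity) hn.1 (by positivity)
  · filter_upwards [h] with n hn
    have h0 : 0 ≤ x n := le_trans (by positivity) hn.1
    exact Real.rpow_le_rpow h0 hn.2 (by positivity)

lemma abs_sub_abs_le (x y : ℂ) : ‖x‖ - ‖y‖ ≤ ‖x - y‖ := by
  have := norm_sub_norm_le x y
  simpa using this

lemma C_lower {n : ℕ} (hn : 1 ≤ n) : (4 : ℝ) ^ n ≤ 2 * n * ((2 * n).choose n : ℝ) := by
  have h := Nat.four_pow_le_two_mul_self_mul_centralBinom n hn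
  rw [Nat.centralBinom_eq_two_mul_choose] at h
  exact_mod_cast h

lemma Dd0_eq (n : ℕ) : (Dd n 0 : ℝ) = ((2 * n).choose n : ℝ) / ((n : ℝ) + 1) := by
  have h := Dd_zero_mul n
  have h2 : ((n : ℝ) + 1) * (Dd n 0 : ℝ) = ((2 * n).choose n : ℝ) := by exact_mod_cast h
  push_cast at h2
  have hpos : ((n : ℝ) + 1) ≠ 0 := by positivity
  field_simp
  linarith

set_option maxHeartbeats 1600000

theorem stmt14 (z : ℂ) :
    (1 < ‖(z + 1) ^ 2 / (4 * z)‖ → 1 < ‖z‖ →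
      Tendsto (fun n : ℕ => ‖Qnn n z‖ ^ ((1 : ℝ) / n)) atTop
        (nhds (‖(z + 1) ^ 2 / z‖))) ∧
    (‖(z + 1) ^ 2 / (4 * z)‖ < 1 →
      Tendsto (fun n : ℕ => ‖Qnn n z‖ ^ ((1 : ℝ) / n)) atTop (nhds 4)) := by
  constructor
  · -- Case 1 : |(z+1)²/(4z)| > 1, |z| > 1
    intro hb hz
    have hz0 : z ≠ 0 := by
      intro h; rw [h] at hz; simp at hz; linarith
    set b := ‖(z + 1) ^ 2 / (4 * z)‖ with hbdef
    set A := ‖(z + 1) ^ 2 / z‖ with hAdef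
    have hA : A = 4 * b := by
      rw [hAdef, hbdef]
      have h1 : (z + 1) ^ 2 / z = 4 * ((z + 1) ^ 2 / (4 * z)) := by
        field_simp
      rw [h1, norm_mul]
      norm_num
    have hA4 : 4 < A := by rw [hA]; linarith
    have hA0 : 0 < A := by linarith
    have habspow : ∀ n : ℕ, ‖(1 + z) ^ (2 * n) / z ^ n‖ = A ^ n := by
      intro n
      have h1 : (1 + z) ^ (2 * n) / z ^ n = ((z + 1) ^ 2 / z) ^ n := by
        rw [div_pow, ← pow_mul, add_comm]
      rw [h1, norm_pow, hAdef]
    have hQw : ∀ n : ℕ, ‖Qnn n z⁻¹‖ ≤ 4 ^ n := by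
      intro n
      apply abs_qnn_le
      rw [norm_inv]
      have : 1 < ‖z‖ := hz
      rw [inv_le_one_iff₀]
      right; linarith
    have hCle : ∀ n : ℕ, (((2 * n).choose n : ℝ)) ≤ 4 ^ n := by
      intro n; exact_mod_cast choose_2n_le n n
    have hbound : ∀ n : ℕ, A ^ n - 2 * 4 ^ n ≤ ‖Qnn n z‖
        ∧ ‖Qnn n z‖ ≤ A ^ n + 2 * 4 ^ n := by
      intro n
      have hs := qnn_symm n hz0
      have h1 : Qnn n z = (1 + z) ^ (2 * n) / z ^ n + (((2 * n).choose n : ℂ) - Qnn n z⁻¹) := by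
        rw [hs]; ring
      have h2 : ‖((2 * n).choose n : ℂ) - Qnn n z⁻¹‖ ≤ 2 * 4 ^ n := by
        refine le_trans (norm_sub_le _ _) ?_
        have h3 : ‖((2 * n).choose n : ℂ)‖ = (((2 * n).choose n : ℝ)) := by simp
        rw [h3]
        linarith [hQw n, hCle n]
      constructor
      · have h4 := abs_sub_abs_le ((1 + z) ^ (2 * n) / z ^ n) (Qnn n z)
        have h5 : ‖(1 + z) ^ (2 * n) / z ^ n - Qnn n z‖
            = ‖((2 * n).choose n : ℂ) - Qnn n z⁻¹‖ := by
          rw [← norm_neg]; congr 1; rw [h1]; ring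
        rw [h5, habspow n] at h4
        linarith
      · calc ‖Qnn n z‖
            ≤ ‖(1 + z) ^ (2 * n) / z ^ n‖
              + ‖((2 * n).choose n : ℂ) - Qnn n z⁻¹‖ := by
              rw [h1]; exact norm_add_le _ _
        _ ≤ A ^ n + 2 * 4 ^ n := by rw [habspow n]; linarith
    have hsmall : Tendsto (fun n : ℕ => (4 / A) ^ n) atTop (nhds 0) :=
      tendsto_pow_atTop_nhds_zero_of_lt_one (by positivity)
        (by rw [div_lt_one hA0]; exact hA4)
    have hev : ∀ᶠ n : ℕ in atTop, 2 * 4 ^ n ≤ A ^ n / 2 := by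
      filter_upwards [hsmall.eventually_lt_const (show (0 : ℝ) < 1 / 4 by norm_num)] with n hn
      rw [div_pow, div_lt_iff₀ (by positivity)] at hn
      nlinarith [pow_nonneg hA0.le n]
    refine master hA0 (show (0 : ℝ) < 1 / 2 by norm_num) (show (0 : ℝ) < 3 by norm_num) ?_
    filter_upwards [hev] with n hn
    have hP1 : (1 : ℝ) ≤ ((n : ℝ) + 1) * (2 * n + 1) := by
      nlinarith [Nat.cast_nonneg (α := ℝ) n]
    obtain ⟨hl, hu⟩ := hbound n
    constructor
    · have hds : 1 / 2 * A ^ n / (((n : ℝ) + 1) * (2 * n + 1)) ≤ 1 / 2 * A ^ n :=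
        div_le_self (by positivity) hP1
      linarith
    · linarith
  · -- Case 2 : |(z+1)²/(4z)| < 1
    intro hb
    set b := ‖(z + 1) ^ 2 / (4 * z)‖ with hbdef
    have hb0 : 0 ≤ b := norm_nonneg _
    have hz1 : z ≠ 1 := by
      intro h
      have hb1 : b = 1 := by rw [hbdef, h]; norm_num
      linarith
    by_cases hzle : ‖z‖ ≤ 1
    · -- small |z|
      have hre1 : z.re < 1 := by
        by_contra h
        push_neg at h
        have h1 : z.re ≤ 1 := re_le_one_of_abs_le hzle
        have h2 : z.re = 1 := le_antisymm h1 h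
        have h3 : ‖z‖ ^ 2 = z.re ^ 2 + z.im ^ 2 := by
          rw [Complex.sq_norm, Complex.normSq_apply]; ring
        have h4 : ‖z‖ ^ 2 ≤ 1 := by nlinarith [norm_nonneg z]
        have h5 : z.im = 0 := by nlinarith
        exact hz1 (Complex.ext (by simp [h2]) (by simp [h5]))
      have hrepos : (0 : ℝ) < 1 - z.re := by linarith
      refine master (by norm_num : (0 : ℝ) < 4)
        (show (0 : ℝ) < (1 - z.re) / 2 by linarith) one_pos ?_
      filter_upwards [eventually_ge_atTop 1] with n hn
      obtain ⟨m, rfl⟩ : ∃ m, n = m + 1 := ⟨n - 1, by omega⟩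
      set N : ℝ := ((m + 1 : ℕ) : ℝ) with hN
      have hN1 : (1 : ℝ) ≤ N := by rw [hN]; exact_mod_cast hn
      set C : ℝ := ((2 * (m + 1)).choose (m + 1) : ℝ) with hC
      have hCpos : (0 : ℝ) ≤ C := Nat.cast_nonneg _
      have hC4 : (4 : ℝ) ^ (m + 1) ≤ 2 * N * C := C_lower hn
      constructor
      · -- lower bound
        have h1 := re_bound m hzle
        have h2 : ((1 - z) * Qnn (m + 1) z).re ≤ 2 * ‖Qnn (m + 1) z‖ := by
          have ha : ‖1 - z‖ ≤ 2 := by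
            refine le_trans (norm_sub_le _ _) ?_
            rw [norm_one]; linarith
          calc ((1 - z) * Qnn (m + 1) z).re
              ≤ ‖(1 - z) * Qnn (m + 1) z‖ := Complex.re_le_norm _
            _ = ‖1 - z‖ * ‖Qnn (m + 1) z‖ := norm_mul _ _
            _ ≤ 2 * ‖Qnn (m + 1) z‖ := by
                nlinarith [norm_nonneg (Qnn (m + 1) z)]
        have hD : (Dd (m + 1) 0 : ℝ) = C / (N + 1) := Dd0_eq (m + 1)
        have key2 : (4 : ℝ) ^ (m + 1) / ((N + 1) * (2 * N + 1)) ≤ (Dd (m + 1) 0 : ℝ) := by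
          rw [hD, div_le_div_iff₀ (by positivity) (by positivity)]
          nlinarith
        have h6 : (Dd (m + 1) 0 : ℝ) * (1 - z.re) ≤ 2 * ‖Qnn (m + 1) z‖ :=
          le_trans h1 h2
        have h7 := mul_le_mul_of_nonneg_left key2 (show (0 : ℝ) ≤ (1 - z.re) / 2 by linarith)
        calc (1 - z.re) / 2 * 4 ^ (m + 1) / ((N + 1) * (2 * N + 1))
            = (1 - z.re) / 2 * ((4 : ℝ) ^ (m + 1) / ((N + 1) * (2 * N + 1))) := by
              rw [mul_div_assoc]
          _ ≤ (1 - z.re) / 2 * (Dd (m + 1) 0 : ℝ) := h7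
          _ ≤ ‖Qnn (m + 1) z‖ := by nlinarith
      · -- upper bound
        have := abs_qnn_le (m + 1) hzle
        linarith
    · -- large |z|
      push_neg at hzle
      have hz0 : z ≠ 0 := by
        intro h; rw [h] at hzle; simp at hzle; linarith
      have hrw : ‖z⁻¹‖ < 1 := by
        rw [norm_inv]
        exact inv_lt_one_of_one_lt₀ hzle
      have hr0 : 0 < ‖z⁻¹‖ := by
        rw [norm_inv]
        exact inv_pos.2 (by linarith)
      set r := ‖z⁻¹‖ with hrdef
      have hA : ‖(z + 1) ^ 2 / z‖ = 4 * b := by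
        rw [hbdef]
        have h1 : (z + 1) ^ 2 / z = 4 * ((z + 1) ^ 2 / (4 * z)) := by
          field_simp
        rw [h1, norm_mul]
        norm_num
      have habspow : ∀ n : ℕ, ‖(1 + z) ^ (2 * n) / z ^ n‖ = (4 * b) ^ n := by
        intro n
        have h1 : (1 + z) ^ (2 * n) / z ^ n = ((z + 1) ^ 2 / z) ^ n := by
          rw [div_pow, ← pow_mul, add_comm]
        rw [h1, norm_pow, hA]
      have hsmall : Tendsto (fun n : ℕ => 2 * (n : ℝ) * b ^ n) atTop (nhds 0) := by
        have h := (tendsto_self_mul_const_pow_of_lt_one hb0 hb).const_mul 2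
        simp only [mul_zero] at h
        refine h.congr (fun n => by ring)
      have hc₁ : (0 : ℝ) < r * (1 - r) / 8 :=
        div_pos (mul_pos hr0 (by linarith)) (by norm_num)
      refine master (by norm_num : (0 : ℝ) < 4) hc₁ (show (0 : ℝ) < 3 by norm_num) ?_
      filter_upwards [hsmall.eventually_lt_const hc₁, eventually_ge_atTop 1] with n hb2 hn
      obtain ⟨m, rfl⟩ : ∃ m, n = m + 1 := ⟨n - 1, by omega⟩
      set N : ℝ := ((m + 1 : ℕ) : ℝ) with hN
      have hN1 : (1 : ℝ) ≤ N := by rw [hN]; exact_mod_cast hn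
      set C : ℝ := ((2 * (m + 1)).choose (m + 1) : ℝ) with hC
      have hCpos : (0 : ℝ) ≤ C := Nat.cast_nonneg _
      have hC4 : (4 : ℝ) ^ (m + 1) ≤ 2 * N * C := C_lower hn
      have hCle : C ≤ 4 ^ (m + 1) := by
        rw [hC]; exact_mod_cast choose_2n_le (m + 1) (m + 1)
      have hQw : ‖Qnn (m + 1) z⁻¹‖ ≤ 4 ^ (m + 1) := abs_qnn_le (m + 1) hrw.le
      have hs := qnn_symm (m + 1) hz0
      -- |C - Q(w)| lower bound
      have h5 := abs_C_sub_qnn m hrw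
      have hD : (Dd (m + 1) 0 : ℝ) = C / (N + 1) := Dd0_eq (m + 1)
      have hDle : (Dd (m + 1) 0 : ℝ) ≤ C / 2 := by
        rw [hD, div_le_div_iff₀ (by linarith) (by norm_num)]
        nlinarith
      have hDnn : (0 : ℝ) ≤ (Dd (m + 1) 0 : ℝ) := Nat.cast_nonneg _
      have hrr : (0 : ℝ) ≤ r * (1 - r) := le_of_lt (mul_pos hr0 (by linarith))
      have h6a : C / 2 * (r * (1 - r)) ≤ (C - (Dd (m + 1) 0 : ℝ)) * (r * (1 - r)) :=
        mul_le_mul_of_nonneg_right (by linarith) hrr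
      have h6 : C * (r * (1 - r)) / 4
          ≤ ‖((2 * (m + 1)).choose (m + 1) : ℂ) - Qnn (m + 1) z⁻¹‖ := by
        linarith
      -- triangle : |Q z| ≥ |C - Q w| - (4b)^(m+1)
      have htri : ‖((2 * (m + 1)).choose (m + 1) : ℂ) - Qnn (m + 1) z⁻¹‖
            - (4 * b) ^ (m + 1) ≤ ‖Qnn (m + 1) z‖ := by
        have h7 := abs_sub_abs_le
          ((((2 * (m + 1)).choose (m + 1) : ℂ)) - Qnn (m + 1) z⁻¹) (Qnn (m + 1) z)
        have h8 : ((((2 * (m + 1)).choose (m + 1) : ℂ)) - Qnn (m + 1) z⁻¹) - Qnn (m + 1) z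
            = -((1 + z) ^ (2 * (m + 1)) / z ^ (m + 1)) := by
          rw [hs]; ring
        rw [h8, norm_neg, habspow (m + 1)] at h7
        linarith
      -- (4b)^(m+1) is eventually small
      have hbn : (4 * b) ^ (m + 1) ≤ C * (r * (1 - r)) / 8 := by
        have h9 : (4 * b) ^ (m + 1) = 4 ^ (m + 1) * b ^ (m + 1) := mul_pow 4 b (m + 1)
        have hbp : (0 : ℝ) ≤ b ^ (m + 1) := pow_nonneg hb0 _
        have h10 : (4 : ℝ) ^ (m + 1) * b ^ (m + 1) ≤ (2 * N * C) * b ^ (m + 1) :=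
          mul_le_mul_of_nonneg_right hC4 hbp
        have h11 : (2 * N * C) * b ^ (m + 1) = C * (2 * N * b ^ (m + 1)) := by ring
        have h12 : C * (2 * N * b ^ (m + 1)) ≤ C * (r * (1 - r) / 8) :=
          mul_le_mul_of_nonneg_left hb2.le hCpos
        calc (4 * b) ^ (m + 1) = 4 ^ (m + 1) * b ^ (m + 1) := h9
          _ ≤ (2 * N * C) * b ^ (m + 1) := h10
          _ ≤ C * (r * (1 - r) / 8) := by rw [h11]; exact h12
          _ = C * (r * (1 - r)) / 8 := by ring
      constructor
      · -- lower
        have key2 : (4 : ℝ) ^ (m + 1) / ((N + 1) * (2 * N + 1)) ≤ C := by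
          rw [div_le_iff₀ (by positivity)]
          nlinarith
        have hq : C * (r * (1 - r)) / 8 ≤ ‖Qnn (m + 1) z‖ := by
          linarith
        calc r * (1 - r) / 8 * 4 ^ (m + 1) / ((N + 1) * (2 * N + 1))
            = r * (1 - r) / 8 * ((4 : ℝ) ^ (m + 1) / ((N + 1) * (2 * N + 1))) := by
              rw [mul_div_assoc]
          _ ≤ r * (1 - r) / 8 * C := by
              exact mul_le_mul_of_nonneg_left key2 hc₁.le
          _ = C * (r * (1 - r)) / 8 := by ring
          _ ≤ ‖Qnn (m + 1) z‖ := hq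
      · -- upper
        have hb4 : (4 * b) ^ (m + 1) ≤ 4 ^ (m + 1) :=
          pow_le_pow_left₀ (by linarith) (by linarith) (m + 1)
        have hup : ‖Qnn (m + 1) z‖
            ≤ (4 * b) ^ (m + 1) + C + 4 ^ (m + 1) := by
          rw [hs]
          refine le_trans (norm_sub_le _ _) ?_
          have h13 : ‖(1 + z) ^ (2 * (m + 1)) / z ^ (m + 1)
              + ((2 * (m + 1)).choose (m + 1) : ℂ)‖
              ≤ (4 * b) ^ (m + 1) + C := by
            refine le_trans (norm_add_le _ _) ?_
            rw [habspow (m + 1)]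
            have : ‖((2 * (m + 1)).choose (m + 1) : ℂ)‖ = C := by
              rw [hC]; simp
            rw [this]
          linarith
        calc ‖Qnn (m + 1) z‖ ≤ (4 * b) ^ (m + 1) + C + 4 ^ (m + 1) := hup
          _ ≤ 3 * 4 ^ (m + 1) := by linarith
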